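/- Let f : C × C → ℝ satisfy the Lipschitz-type condition with constants γ₁, γ₂ > 0. Define a sequence λ : ℕ → ℝ with λ₀ > 0 and λ_{n+1} = min{λ_n, μ(d(x_n,y_n)² + d(x_{n+1},y_n)²) / (2 max{f(x_n,x_{n+1}) - f(x_n,y_n) - f(y_n,x_{n+1}), 0})} for some μ ∈ (0,1) and sequences x_n, y_n in C (with the convention a/0 = +∞, so λ_{n+1} = λ_n when the denominator is 0). Then for all n, λ_n ≥ min{λ₀, μ/(2 max{γ₁, γ₂})}; in particular, λ is non-increasing and bounded below by a positive constant, hence converges to some λ > 0. -/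
import Mathlib


open Filter

/-- The stepsize sequence of the explicit extragradient algorithm is bounded below by a
positive constant, non-increasing, and hence convergent to a positive limit. -/
theorem stepsize_bounded_below_and_convergent
    {X : Type*} [MetricSpace X] (C : Set X) (f : X → X → ℝ)
    (γ₁ γ₂ : ℝ) (hγ₁ : 0 < γ₁) (hγ₂ : 0 < γ₂)
    (hL : ∀ x ∈ C, ∀ y ∈ C, ∀ z ∈ C,
      f x y + f y z ≥ f x z - γ₁ * dist x y ^ 2 - γ₂ * dist y z ^ 2)
    (μ : ℝ) (hμ : μ ∈ Set.Ioo (0 : ℝ) 1)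
    (x y : ℕ → X) (hx : ∀ n, x n ∈ C) (hy : ∀ n, y n ∈ C)
    (lam : ℕ → ℝ) (hlam0 : 0 < lam 0)
    (hrec : ∀ n,
      lam (n + 1) =
        if max (f (x n) (x (n + 1)) - f (x n) (y n) - f (y n) (x (n + 1))) 0 = 0 then lam n
        else min (lam n)
          (μ * (dist (x n) (y n) ^ 2 + dist (x (n + 1)) (y n) ^ 2) /
            (2 * max (f (x n) (x (n + 1)) - f (x n) (y n) - f (y n) (x (n + 1))) 0))) :
    (∀ n, lam n ≥ min (lam 0) (μ / (2 * max γ₁ γ₂))) ∧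
    (∀ n, lam (n + 1) ≤ lam n) ∧
    (∃ l : ℝ, 0 < l ∧ Tendsto lam atTop (nhds l)) := by
  obtain ⟨hμ0, hμ1⟩ := hμ
  have hγ : (0:ℝ) < max γ₁ γ₂ := lt_max_of_lt_left hγ₁
  have hb : (0:ℝ) < min (lam 0) (μ / (2 * max γ₁ γ₂)) :=
    lt_min hlam0 (div_pos hμ0 (by positivity))
  -- key estimate on the quotient
  have hquot : ∀ n, max (f (x n) (x (n + 1)) - f (x n) (y n) - f (y n) (x (n + 1))) 0 ≠ 0 →
      μ / (2 * max γ₁ γ₂) ≤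
        μ * (dist (x n) (y n) ^ 2 + dist (x (n + 1)) (y n) ^ 2) /
          (2 * max (f (x n) (x (n + 1)) - f (x n) (y n) - f (y n) (x (n + 1))) 0) := by
    intro n hM
    set A := f (x n) (x (n + 1)) - f (x n) (y n) - f (y n) (x (n + 1)) with hA
    have hMpos : 0 < max A 0 := lt_of_le_of_ne (le_max_right _ _) (Ne.symm hM)
    set d₁ := dist (x n) (y n)
    set d₂ := dist (x (n + 1)) (y n)
    have hAle : A ≤ γ₁ * d₁ ^ 2 + γ₂ * d₂ ^ 2 := by
      have := hL (x n) (hx n) (y n) (hy n) (x (n + 1)) (hx (n + 1))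
      have hd : dist (y n) (x (n + 1)) = d₂ := dist_comm _ _
      rw [hd] at this
      linarith
    have hRHSnn : 0 ≤ γ₁ * d₁ ^ 2 + γ₂ * d₂ ^ 2 := by positivity
    have hMle : max A 0 ≤ max γ₁ γ₂ * (d₁ ^ 2 + d₂ ^ 2) := by
      have h1 : γ₁ * d₁ ^ 2 + γ₂ * d₂ ^ 2 ≤ max γ₁ γ₂ * (d₁ ^ 2 + d₂ ^ 2) := by
        have := le_max_left γ₁ γ₂
        have := le_max_right γ₁ γ₂
        nlinarith [sq_nonneg d₁, sq_nonneg d₂]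
      exact le_trans (max_le hAle hRHSnn) (le_trans (le_refl _) h1)
    have hSpos : 0 < d₁ ^ 2 + d₂ ^ 2 := by
      by_contra h
      push_neg at h
      have : max γ₁ γ₂ * (d₁ ^ 2 + d₂ ^ 2) ≤ 0 :=
        mul_nonpos_of_nonneg_of_nonpos hγ.le h
      linarith [lt_of_lt_of_le hMpos hMle]
    rw [div_le_div_iff₀ (by positivity) (by positivity)]
    have : max A 0 * μ ≤ max γ₁ γ₂ * (d₁ ^ 2 + d₂ ^ 2) * μ :=
      mul_le_mul_of_nonneg_right hMle hμ0.le
    nlinarith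
  have hmono : ∀ n, lam (n + 1) ≤ lam n := by
    intro n
    rw [hrec n]
    split
    · exact le_refl _
    · exact min_le_left _ _
  have hlb : ∀ n, lam n ≥ min (lam 0) (μ / (2 * max γ₁ γ₂)) := by
    intro n
    induction n with
    | zero => exact min_le_left _ _
    | succ n ih =>
      rw [hrec n]
      split
      · exact ih
      · next h =>
        exact le_min ih (le_trans (min_le_right _ _) (hquot n h))
  refine ⟨hlb, hmono, ?_⟩
  have hanti : Antitone lam := antitone_nat_of_succ_le hmono
  have hbdd : BddBelow (Set.range lam) :=
    ⟨min (lam 0) (μ / (2 * max γ₁ γ₂)), by rintro _ ⟨n, rfl⟩; exact hlb n⟩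
  refine ⟨⨅ n, lam n, ?_, tendsto_atTop_ciInf hanti hbdd⟩
  exact lt_of_lt_of_le hb (le_ciInf hlb)
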